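/- Let m be a natural number, M an m×m complex matrix, and J an invertible skew-symmetric m×m complex matrix (Jᵀ = -J) such that J·Mᵀ = M·J. Then there exists a polynomial p ∈ ℂ[X] with charpoly(M) = p²; equivalently, every eigenvalue of M has even algebraic multiplicity. -/

import Mathlib

open Matrix


lemma skew_det_sq {K : Type*} [Field K] (htwo : (2 : K) ≠ 0) :
    ∀ (n : ℕ) (B : Matrix (Fin n) (Fin n) K), Bᵀ = -B → ∃ d : K, B.det = d ^ 2 := by
  intro n
  induction n using Nat.strong_induction_on with
  | _ n ih =>
  intro B hskew
  -- diagonal is zero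
  have hdiag : ∀ i, B i i = 0 := by
    intro i
    have h1 : B i i = -(B i i) := congrFun (congrFun hskew i) i
    have : 2 * B i i = 0 := by ring_nf; linear_combination h1
    exact (mul_eq_zero.mp this).resolve_left htwo
  by_cases hB0 : B = 0
  · subst hB0
    rcases Nat.eq_zero_or_pos n with h0 | hpos
    · subst h0
      exact ⟨1, by simp [Matrix.det_fin_zero]⟩
    · have : Nonempty (Fin n) := ⟨⟨0, hpos⟩⟩
      exact ⟨0, by simp⟩
  · -- find a nonzero off-diagonal entry
    obtain ⟨i, j, hij⟩ : ∃ i j, B i j ≠ 0 := by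
      by_contra h
      push_neg at h
      exact hB0 (by ext i j; simp [h i j])
    have hne : i ≠ j := by rintro rfl; exact hij (hdiag i)
    -- n ≥ 2
    obtain ⟨k, rfl⟩ : ∃ k, n = k + 2 := by
      have h2 : 2 ≤ n := by
        rcases Nat.lt_or_ge n 2 with h | h
        · interval_cases n
          · exact absurd i.isLt (by omega)
          · have hi := i.isLt; have hj := j.isLt
            exact absurd (Fin.ext (by omega)) hne
        · exact h
      exact ⟨n - 2, by omega⟩
    -- permutation sending 0 ↦ i, 1 ↦ j
    set τ : Equiv.Perm (Fin (k + 2)) := Equiv.swap 0 i with hτ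
    have hτj : τ.symm j ≠ 0 := by
      rw [Ne, Equiv.symm_apply_eq]
      intro h
      exact hne (by rw [h, hτ, Equiv.swap_apply_left])
    set ρ : Equiv.Perm (Fin (k + 2)) := Equiv.swap 1 (τ.symm j) with hρ
    set σ : Equiv.Perm (Fin (k + 2)) := ρ.trans τ with hσ
    have hσ0 : σ 0 = i := by
      have hρ0 : ρ 0 = 0 :=
        Equiv.swap_apply_of_ne_of_ne (by simp [Fin.ext_iff]) (Ne.symm hτj)
      simp [hσ, Equiv.trans_apply, hρ0, hτ, Equiv.swap_apply_left]
    have hσ1 : σ 1 = j := by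
      simp [hσ, Equiv.trans_apply, hρ, Equiv.swap_apply_left]
    -- reindex as a block matrix
    set e : Fin 2 ⊕ Fin k ≃ Fin (k + 2) :=
      (finSumFinEquiv.trans (finCongr (by omega))).trans σ with he
    set D : Matrix (Fin 2 ⊕ Fin k) (Fin 2 ⊕ Fin k) K := B.submatrix e e with hDdef
    have hdetD : D.det = B.det := Matrix.det_submatrix_equiv_self e B
    have hskew' : ∀ a b, B b a = - B a b := by
      intro a b
      exact congrFun (congrFun hskew a) b
    have hDskew : Dᵀ = -D := by
      ext a b
      simp only [hDdef, Matrix.transpose_apply, Matrix.submatrix_apply, Matrix.neg_apply]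
      exact hskew' (e a) (e b)
    have he0 : e (Sum.inl 0) = i := by
      have h9 : (finSumFinEquiv.trans (finCongr (by omega : 2 + k = k + 2))) (Sum.inl (0 : Fin 2)) = (0 : Fin (k+2)) := by
        simp [Fin.ext_iff]
      simp [he, Equiv.trans_apply, h9, hσ0]
    have he1 : e (Sum.inl 1) = j := by
      have h9 : (finSumFinEquiv.trans (finCongr (by omega : 2 + k = k + 2))) (Sum.inl (1 : Fin 2)) = (1 : Fin (k+2)) := by
        simp [Fin.ext_iff]
      simp [he, Equiv.trans_apply, h9, hσ1]
    set A := D.toBlocks₁₁ with hA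
    set Bb := D.toBlocks₁₂ with hBb
    set Cc := D.toBlocks₂₁ with hCc
    set Dd := D.toBlocks₂₂ with hDd
    have hD : D = Matrix.fromBlocks A Bb Cc Dd := (Matrix.fromBlocks_toBlocks D).symm
    set b : K := B i j with hb
    have hA01 : A 0 1 = b := by simp [hA, Matrix.toBlocks₁₁, hDdef, he0, he1, hb]
    have hA10 : A 1 0 = -b := by
      have h2 := hskew' (e (Sum.inl 0)) (e (Sum.inl 1))
      simpa [hA, Matrix.toBlocks₁₁, hDdef, he0, he1, ← hb] using h2
    have hA00 : A 0 0 = 0 := by simp [hA, Matrix.toBlocks₁₁, hDdef, hdiag]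
    have hA11 : A 1 1 = 0 := by simp [hA, Matrix.toBlocks₁₁, hDdef, hdiag]
    have hdetA : A.det = b ^ 2 := by
      rw [Matrix.det_fin_two, hA00, hA11, hA01, hA10]; ring
    have hdetAne : IsUnit A.det := by
      rw [hdetA]; exact (pow_ne_zero 2 hij).isUnit
    have hAB : A * (A⁻¹ * Bb) = Bb := by
      rw [← Matrix.mul_assoc, Matrix.mul_nonsing_inv _ hdetAne, Matrix.one_mul]
    set X : Matrix (Fin 2) (Fin k) K := -(A⁻¹ * Bb) with hX
    set Fm : Matrix (Fin 2 ⊕ Fin k) (Fin 2 ⊕ Fin k) K := Matrix.fromBlocks 1 X 0 1 with hFm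
    set Z : Matrix (Fin k) (Fin 2) K := Xᵀ * A + Cc with hZdef
    set S : Matrix (Fin k) (Fin k) K := Cc * X + Dd with hSdef
    have hAX : A * X = -Bb := by rw [hX, Matrix.mul_neg, hAB]
    have h1 : D * Fm = Matrix.fromBlocks A 0 Cc S := by
      rw [hD, hFm, Matrix.fromBlocks_multiply]
      simp only [Matrix.mul_one, Matrix.mul_zero, add_zero, hAX]
      rw [← hSdef, neg_add_cancel]
    have hFt : Fmᵀ = Matrix.fromBlocks 1 0 Xᵀ 1 := by
      simp [hFm, Matrix.fromBlocks_transpose]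
    have hGeq : Fmᵀ * D * Fm = Matrix.fromBlocks A 0 Z S := by
      rw [Matrix.mul_assoc, h1, hFt, Matrix.fromBlocks_multiply]
      simp only [Matrix.one_mul, Matrix.zero_mul, Matrix.mul_zero, add_zero, zero_add]
      rfl
    have hGskew : (Matrix.fromBlocks A 0 Z S)ᵀ = -(Matrix.fromBlocks A 0 Z S) := by
      rw [← hGeq]
      rw [Matrix.transpose_mul, Matrix.transpose_mul, Matrix.transpose_transpose, hDskew]
      simp [Matrix.mul_assoc, Matrix.neg_mul, Matrix.mul_neg]
    have hZ0 : Z = 0 := by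
      have h2 := congrArg Matrix.toBlocks₂₁ hGskew
      rw [Matrix.fromBlocks_transpose, Matrix.fromBlocks_neg] at h2
      simp only [Matrix.toBlocks_fromBlocks₂₁] at h2
      have h3 : (0 : Matrix (Fin k) (Fin 2) K) = -Z := by simpa using h2
      simpa using h3.symm
    have hSskew : Sᵀ = -S := by
      have h2 := congrArg Matrix.toBlocks₂₂ hGskew
      rw [Matrix.fromBlocks_transpose, Matrix.fromBlocks_neg] at h2
      simpa only [Matrix.toBlocks_fromBlocks₂₂] using h2
    obtain ⟨d, hd⟩ := ih k (by omega) S hSskew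
    have hdetF : Fm.det = 1 := by
      rw [hFm, Matrix.det_fromBlocks_zero₂₁, Matrix.det_one, Matrix.det_one, mul_one]
    have hdetG : (Matrix.fromBlocks A 0 Z S).det = b ^ 2 * d ^ 2 := by
      rw [hZ0, Matrix.det_fromBlocks_zero₂₁, hdetA, hd]
    refine ⟨b * d, ?_⟩
    have hfin : (Matrix.fromBlocks A 0 Z S).det = B.det := by
      rw [← hGeq, Matrix.det_mul, Matrix.det_mul, Matrix.det_transpose, hdetF, hdetD]
      ring
    rw [← hfin, hdetG]; ring


open Polynomial in
/-- **Transpose-type Kramers degeneracy (EAZ classes AII and A_T).**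
Let `M` be an `m × m` complex matrix and `J` an invertible skew-symmetric matrix
(`Jᵀ = -J`) with `J ⬝ Mᵀ = M ⬝ J`.  Then the characteristic polynomial of `M` is a
square: there is a polynomial `p` with `charpoly M = p ^ 2`; equivalently every
eigenvalue of `M` has even algebraic multiplicity. -/
theorem charpoly_sq_of_skew_selfdual (m : ℕ)
    (M J : Matrix (Fin m) (Fin m) ℂ)
    (hJunit : IsUnit J)
    (hJskew : Jᵀ = -J)
    (hcomm : J * Mᵀ = M * J) :
    ∃ p : Polynomial ℂ, M.charpoly = p ^ 2 := by
  classical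
  set K := RatFunc ℂ
  set R := Polynomial ℂ
  -- the skew-symmetric polynomial matrix
  set Bp : Matrix (Fin m) (Fin m) R := charmatrix M * J.map C with hBp
  have hcm : ∀ (N : Matrix (Fin m) (Fin m) ℂ),
      charmatrix N = Matrix.scalar (Fin m) (X : R) - N.map C := by
    intro N; rfl
  have h1 : (charmatrix M)ᵀ = charmatrix Mᵀ := by
    ext i j
    by_cases h : i = j
    · subst h; simp
    · simp [Matrix.transpose_apply, charmatrix_apply_ne _ _ _ h,
        charmatrix_apply_ne _ _ _ (Ne.symm h)]
  have hscal : ∀ (N : Matrix (Fin m) (Fin m) R),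
      N * Matrix.scalar (Fin m) (X : R) = Matrix.scalar (Fin m) (X : R) * N := by
    intro N
    exact (Matrix.scalar_commute (X : R) (fun r' => mul_comm _ _) N).symm
  have h2 : J.map C * charmatrix Mᵀ = charmatrix M * J.map C := by
    rw [hcm Mᵀ, hcm M, Matrix.mul_sub, Matrix.sub_mul, hscal (J.map C),
      ← Matrix.map_mul, ← Matrix.map_mul, hcomm]
  have hmapneg : (-J).map C = -(J.map C) := by ext i j; simp
  have hBskew : Bpᵀ = -Bp := by
    rw [hBp, Matrix.transpose_mul, ← Matrix.transpose_map, h1, hJskew, hmapneg,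
      Matrix.neg_mul, h2]
  -- pass to the fraction field
  have htwo : (2 : K) ≠ 0 := by
    have h2R : (2 : R) ≠ 0 := two_ne_zero
    intro h
    apply h2R
    apply IsFractionRing.injective R K
    rw [map_ofNat, map_zero, h]
  set Bk : Matrix (Fin m) (Fin m) K := Bp.map (algebraMap R K) with hBk
  have hBkskew : Bkᵀ = -Bk := by
    rw [hBk, ← Matrix.transpose_map, hBskew]
    ext i j; simp
  obtain ⟨d, hd⟩ := skew_det_sq htwo m Bk hBkskew
  have hdetBk : Bk.det = algebraMap R K Bp.det := ((algebraMap R K).map_det Bp).symm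
  have hdetBp : Bp.det = M.charpoly * C J.det := by
    rw [hBp, Matrix.det_mul]
    congr 1
    exact ((C : ℂ →+* R).map_det J).symm
  -- a square root of det J
  have hdetJ : J.det ≠ 0 := ((Matrix.isUnit_iff_isUnit_det J).mp hJunit).ne_zero
  obtain ⟨c, hc⟩ := IsAlgClosed.exists_pow_nat_eq (k := ℂ) J.det (n := 2) (by norm_num)
  have hcne : c ≠ 0 := by
    intro h; apply hdetJ; rw [← hc, h]; ring
  set cK : K := algebraMap R K (C c) with hcK
  have hcKne : cK ≠ 0 := by
    rw [hcK]
    intro h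
    have := IsFractionRing.injective R K (by rw [h, map_zero] : algebraMap R K (C c) = algebraMap R K 0)
    exact hcne (by simpa using this)
  set g : K := d / cK with hg
  have hcK2 : cK ^ 2 = algebraMap R K (C J.det) := by
    rw [hcK, ← map_pow, ← map_pow, hc]
  have hgsq : g ^ 2 = algebraMap R K M.charpoly := by
    have hne : algebraMap R K (C J.det) ≠ 0 := by rw [← hcK2]; exact pow_ne_zero 2 hcKne
    rw [hg, div_pow, hcK2, ← hd, hdetBk, hdetBp, _root_.map_mul]
    rw [mul_div_assoc, div_self hne, mul_one]
  -- descend to the polynomial ring by integral closedness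
  have hint : IsIntegral R g := by
    refine ⟨X ^ 2 - C M.charpoly, monic_X_pow_sub_C _ (by norm_num), ?_⟩
    simp [eval₂_sub, eval₂_pow, hgsq]
  obtain ⟨p, hp⟩ := IsIntegrallyClosed.isIntegral_iff.mp hint
  refine ⟨p, ?_⟩
  apply IsFractionRing.injective R K
  rw [map_pow, hp, hgsq]
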